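/- Let F be a field with char(F) ≠ 2 and G a non-abelian group, N an index-2 subgroup of G, and suppose the involution * on G fixes every element of G \ N and acts on the abelian subgroup N by n* = a⁻¹na for a ∈ G \ N. Then for any α = β + γa ∈ FG with β, γ ∈ FN, the oriented involution satisfies α⊛ = a⁻¹βa − γa, and αα⊛ = α⊛α. -/

import Mathlib

/-- The oriented involution on the group algebra: `(Σ α_g g)⊛ = Σ α_g σ(g) g*`. -/
noncomputable def oinvMap {F G : Type*} [Field F] [Group G] (st : G → G) (σ : G → F) :
    MonoidAlgebra F G → MonoidAlgebra F G :=
  fun α => Finsupp.sum α.coeff fun g c => MonoidAlgebra.single (st g) (σ g * c)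

section Aux

variable {F G : Type*} [Field F] [Group G] (st : G → G) (σ : G → F)

/-- `oinvMap` bundled as an additive monoid hom. -/
noncomputable def oinvHom : MonoidAlgebra F G →+ MonoidAlgebra F G where
  toFun := oinvMap st σ
  map_zero' := Finsupp.sum_zero_index
  map_add' f g := by
    show oinvMap st σ (f + g) = oinvMap st σ f + oinvMap st σ g
    unfold oinvMap
    rw [MonoidAlgebra.coeff_add]
    exact Finsupp.sum_add_index' (fun g => by simp)
      (fun g c₁ c₂ => by rw [mul_add, MonoidAlgebra.single_add])

lemma oinv_single (g : G) (c : F) :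
    oinvMap st σ (MonoidAlgebra.single g c) = MonoidAlgebra.single (st g) (σ g * c) :=
  MonoidAlgebra.sum_single_index (by simp)

/-- Elements supported on the kernel of `σ` commute. -/
lemma comm_of_supp (habN : ∀ m n : G, σ m = 1 → σ n = 1 → m * n = n * m)
    (β γ : MonoidAlgebra F G)
    (hβ : ∀ g ∈ β.coeff.support, σ g = 1) (hγ : ∀ g ∈ γ.coeff.support, σ g = 1) :
    β * γ = γ * β := by
  rw [MonoidAlgebra.mul_def, MonoidAlgebra.mul_def, Finsupp.sum_comm]
  refine Finsupp.sum_congr fun g hg => Finsupp.sum_congr fun g' hg' => ?_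
  rw [habN g' g (hβ g' hg') (hγ g hg), mul_comm]

end Aux

theorem stmt_19 {F G : Type*} [Field F] [Group G] (h2 : (2 : F) ≠ 0)
    (hna : ∃ g h : G, g * h ≠ h * g)
    (st : G → G) (hanti : ∀ g h : G, st (g * h) = st h * st g)
    (hinvol : ∀ g : G, st (st g) = g)
    (σ : G → F) (hhom : ∀ g h : G, σ (g * h) = σ g * σ h)
    (hval : ∀ g : G, σ g = 1 ∨ σ g = -1)
    (habN : ∀ m n : G, σ m = 1 → σ n = 1 → m * n = n * m)
    (a : G) (ha : σ a = -1)
    (hstX : ∀ x : G, σ x = -1 → st x = x)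
    (hstN : ∀ n b : G, σ n = 1 → σ b = -1 → st n = b⁻¹ * n * b) :
    ∀ β γ : MonoidAlgebra F G,
      (∀ g ∈ β.coeff.support, σ g = 1) → (∀ g ∈ γ.coeff.support, σ g = 1) →
      oinvMap st σ (β + γ * MonoidAlgebra.of F G a) =
          MonoidAlgebra.of F G a⁻¹ * β * MonoidAlgebra.of F G a -
            γ * MonoidAlgebra.of F G a ∧
        (β + γ * MonoidAlgebra.of F G a) * oinvMap st σ (β + γ * MonoidAlgebra.of F G a) =
          oinvMap st σ (β + γ * MonoidAlgebra.of F G a) * (β + γ * MonoidAlgebra.of F G a) := by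
  intro β γ hβ hγ
  -- basic facts about σ
  have hone : σ 1 = 1 := by
    have h := hhom 1 1
    rw [one_mul] at h
    rcases hval 1 with h1 | h1
    · exact h1
    · rw [h1] at h
      exact absurd (by linear_combination -h) h2
  have hainv : σ a⁻¹ = -1 := by
    have h := hhom a a⁻¹
    rw [mul_inv_cancel, hone, ha] at h
    rcases hval a⁻¹ with h1 | h1
    · rw [h1] at h
      exact absurd (by linear_combination h) h2
    · exact h1
  -- abbreviations
  set oa := MonoidAlgebra.of F G a with hoa
  set oainv := MonoidAlgebra.of F G a⁻¹ with hoainv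
  have hoa1 : oa = MonoidAlgebra.single a (1 : F) := rfl
  have hoainv1 : oainv = MonoidAlgebra.single a⁻¹ (1 : F) := rfl
  -- the conjugate of β as a sum of singles
  have hβc : oainv * β * oa = β.coeff.sum fun g c => MonoidAlgebra.single (a⁻¹ * g * a) c := by
    conv_lhs => rw [← MonoidAlgebra.sum_coeff_single β]
    rw [Finsupp.sum, Finsupp.sum, Finset.mul_sum, Finset.sum_mul]
    refine Finset.sum_congr rfl fun g hg => ?_
    rw [hoa1, hoainv1, MonoidAlgebra.single_mul_single, MonoidAlgebra.single_mul_single,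
      one_mul, mul_one]
  -- γ·a as a sum of singles
  have hγa : γ * oa = γ.coeff.sum fun g c => MonoidAlgebra.single (g * a) c := by
    conv_lhs => rw [← MonoidAlgebra.sum_coeff_single γ]
    rw [Finsupp.sum, Finsupp.sum, Finset.sum_mul]
    refine Finset.sum_congr rfl fun g hg => ?_
    rw [hoa1, MonoidAlgebra.single_mul_single, mul_one]
  -- oinvMap of β
  have hβinv : oinvMap st σ β = oainv * β * oa := by
    rw [hβc]
    refine Finsupp.sum_congr fun g hg => ?_
    rw [hstN g a (hβ g hg) ha, hβ g hg, one_mul]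
  -- oinvMap of γ·a
  have hγinv : oinvMap st σ (γ * oa) = -(γ * oa) := by
    rw [hγa]
    have h1 : oinvMap st σ (γ.coeff.sum fun g c => MonoidAlgebra.single (g * a) c)
        = γ.coeff.sum fun g c => oinvMap st σ (MonoidAlgebra.single (g * a) c) :=
      map_finsuppSum (oinvHom st σ) γ.coeff _
    rw [h1]
    have h2' : (γ.coeff.sum fun g c => oinvMap st σ (MonoidAlgebra.single (g * a) c))
        = γ.coeff.sum fun g c => -MonoidAlgebra.single (g * a) c := by
      refine Finsupp.sum_congr fun g hg => ?_
      have hsig : σ (g * a) = -1 := by rw [hhom, hγ g hg, ha, one_mul]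
      rw [oinv_single, hstX (g * a) hsig, hsig, ← MonoidAlgebra.single_neg, neg_mul, one_mul]
    rw [h2', Finsupp.sum, Finsupp.sum, ← Finset.sum_neg_distrib]
  -- additivity
  have hadd : oinvMap st σ (β + γ * oa) = oinvMap st σ β + oinvMap st σ (γ * oa) :=
    map_add (oinvHom st σ) β (γ * oa)
  have hmain : oinvMap st σ (β + γ * oa) = oainv * β * oa - γ * oa := by
    rw [hadd, hβinv, hγinv, sub_eq_add_neg]
  refine ⟨hmain, ?_⟩
  rw [hmain]
  -- support of the conjugate
  have hβcsupp : ∀ g ∈ (oainv * β * oa).coeff.support, σ g = 1 := by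
    intro g hg
    rw [Finsupp.mem_support_iff] at hg
    have happ : (oainv * β * oa).coeff g = β.coeff (a * (g * a⁻¹)) := by
      rw [hoa1, hoainv1, MonoidAlgebra.mul_single_apply, MonoidAlgebra.single_mul_apply,
        inv_inv, one_mul, mul_one]
    rw [happ] at hg
    have hmem : a * (g * a⁻¹) ∈ β.coeff.support := Finsupp.mem_support_iff.mpr hg
    have := hβ _ hmem
    rw [hhom, hhom, ha, hainv] at this
    -- this : -1 * (σ g * -1) = 1
    linear_combination this
  -- commutation facts
  have hcomm_ββc : β * (oainv * β * oa) = (oainv * β * oa) * β :=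
    comm_of_supp σ habN β (oainv * β * oa) hβ hβcsupp
  have hcomm_βγ : β * γ = γ * β := comm_of_supp σ habN β γ hβ hγ
  have hcomm_βcγ : (oainv * β * oa) * γ = γ * (oainv * β * oa) :=
    comm_of_supp σ habN (oainv * β * oa) γ hβcsupp hγ
  -- a² commutes with β
  have hsqsupp : ∀ g ∈ (MonoidAlgebra.single (a * a) (1 : F)).coeff.support, σ g = 1 := by
    intro g hg
    have := Finsupp.support_single_subset hg
    rw [Finset.mem_singleton] at this
    rw [this, hhom, ha]; ring
  have hsq : MonoidAlgebra.single (a * a) (1 : F) * β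
      = β * MonoidAlgebra.single (a * a) (1 : F) :=
    comm_of_supp σ habN _ β hsqsupp hβ
  have hsq' : oa * oa * β = β * (oa * oa) := by
    have : oa * oa = MonoidAlgebra.single (a * a) (1 : F) := by
      rw [hoa1, MonoidAlgebra.single_mul_single, one_mul]
    rw [this, hsq]
  have hinvcancel : oainv * oa = 1 := by
    rw [hoa1, hoainv1, MonoidAlgebra.single_mul_single, one_mul, inv_mul_cancel,
      MonoidAlgebra.one_def]
  have hinvcancel' : oa * oainv = 1 := by
    rw [hoa1, hoainv1, MonoidAlgebra.single_mul_single, one_mul, mul_inv_cancel,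
      MonoidAlgebra.one_def]
  -- key : a * β = a⁻¹ * β * a * a
  have hkey : oa * β = oainv * β * oa * oa := by
    calc oa * β = oainv * (oa * oa * β) := by
          rw [← mul_assoc, ← mul_assoc, hinvcancel, one_mul]
      _ = oainv * (β * (oa * oa)) := by rw [hsq']
      _ = oainv * β * oa * oa := by noncomm_ring
  -- cross terms
  have t13 : (γ * oa) * (oainv * β * oa) = β * (γ * oa) := by
    calc (γ * oa) * (oainv * β * oa) = γ * (oa * oainv) * β * oa := by noncomm_ring
      _ = γ * β * oa := by rw [hinvcancel', mul_one]
      _ = β * γ * oa := by rw [hcomm_βγ]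
      _ = β * (γ * oa) := by rw [mul_assoc]
  have t24 : (oainv * β * oa) * (γ * oa) = (γ * oa) * β := by
    calc (oainv * β * oa) * (γ * oa) = ((oainv * β * oa) * γ) * oa := by noncomm_ring
      _ = (γ * (oainv * β * oa)) * oa := by rw [hcomm_βcγ]
      _ = γ * (oainv * β * oa * oa) := by noncomm_ring
      _ = γ * (oa * β) := by rw [← hkey]
      _ = (γ * oa) * β := by noncomm_ring
  -- finish
  calc (β + γ * oa) * (oainv * β * oa - γ * oa)
      = β * (oainv * β * oa) + (γ * oa) * (oainv * β * oa)
        - β * (γ * oa) - (γ * oa) * (γ * oa) := by noncomm_ring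
    _ = (oainv * β * oa) * β + (oainv * β * oa) * (γ * oa)
        - (γ * oa) * β - (γ * oa) * (γ * oa) := by rw [hcomm_ββc, t13, t24]; abel
    _ = (oainv * β * oa - γ * oa) * (β + γ * oa) := by noncomm_ring
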